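/- Let α be a positive integer, 0 < p = 1 - q < 1, and 0 < z ≤ α. Then E[(B_{α,p} - z)^+] ≤ α(α - z)p / z. -/

import Mathlib

open Finset

/-- `E[(B_{α,p} - z)^+]`, the expected call function of a binomial random variable
`B_{α,p}` with `P(B = j) = C(α,j) p^j (1-p)^{α-j}` for `j = 0,…,α`. -/
noncomputable def binomCallExp (α : ℕ) (p z : ℝ) : ℝ :=
  ∑ j ∈ Finset.range (α + 1),
    (α.choose j : ℝ) * p ^ j * (1 - p) ^ (α - j) * max ((j : ℝ) - z) 0

/-- `h₁(k) = ∑_{j=k}^{α} [(α-k)!/(α-j)!]·[(k-1)!/j!]·(p/q)^{j-k}·(j-z)^+` with `q = 1 - p`. -/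
noncomputable def h1 (α : ℕ) (p z : ℝ) (k : ℕ) : ℝ :=
  ∑ j ∈ Finset.Icc k α,
    ((α - k).factorial : ℝ) / ((α - j).factorial : ℝ) *
      (((k - 1).factorial : ℝ) / (j.factorial : ℝ)) *
        (p / (1 - p)) ^ (j - k) * max ((j : ℝ) - z) 0

/-- `h₂(k) = ∑_{j=k}^{α} [(α-k)!/(α-j)!]·[(k-1)!/j!]·(p/q)^{j-k}·E[(B_{α,p}-z)^+]`
with `q = 1 - p`. -/
noncomputable def h2 (α : ℕ) (p z : ℝ) (k : ℕ) : ℝ :=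
  ∑ j ∈ Finset.Icc k α,
    ((α - k).factorial : ℝ) / ((α - j).factorial : ℝ) *
      (((k - 1).factorial : ℝ) / (j.factorial : ℝ)) *
        (p / (1 - p)) ^ (j - k) * binomCallExp α p z

/-- The solution `g_z` of the binomial Stein equation: `g_z(0) = 0`,
`g_z(k) = -∑_{j=k}^{α} [(α-k)!/(α-j)!]·[(k-1)!/j!]·(p/q)^{j-k}·[(j-z)^+ - E(B_{α,p}-z)^+]`
for `1 ≤ k ≤ α`, extended by `g_z(k) = 0` for `k > α` (in particular `g_z(α+1) = 0`). -/
noncomputable def steinSol (α : ℕ) (p z : ℝ) (k : ℕ) : ℝ :=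
  if k = 0 ∨ α < k then 0
  else
    -∑ j ∈ Finset.Icc k α,
      ((α - k).factorial : ℝ) / ((α - j).factorial : ℝ) *
        (((k - 1).factorial : ℝ) / (j.factorial : ℝ)) *
          (p / (1 - p)) ^ (j - k) * (max ((j : ℝ) - z) 0 - binomCallExp α p z)


lemma binom_mean_aux (n : ℕ) (p q : ℝ) :
    ∑ j ∈ Finset.range (n + 1 + 1),
      (j : ℝ) * ((n + 1).choose j : ℝ) * p ^ j * q ^ (n + 1 - j)
      = (n + 1 : ℝ) * p * (p + q) ^ n := by
  rw [Finset.sum_range_succ']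
  simp only [Nat.cast_zero, zero_mul, pow_zero, mul_one, add_zero, Nat.succ_sub_succ]
  rw [add_pow p q n, Finset.mul_sum]
  apply Finset.sum_congr rfl
  intro i hi
  have h' : ((n : ℝ) + 1) * (n.choose i : ℝ) = ((n + 1).choose (i + 1) : ℝ) * ((i : ℝ) + 1) := by
    exact_mod_cast congrArg (Nat.cast : ℕ → ℝ) (Nat.add_one_mul_choose_eq n i)
  push_cast
  linear_combination (-(p ^ i * p * q ^ (n - i))) * h'


/-- For `0 < z ≤ α`, the expected call function of the binomial distribution satisfies
`E[(B_{α,p} - z)^+] ≤ α (α - z) p / z`. -/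
theorem binomCallExp_le_of_le (α : ℕ) (hα : 0 < α) (p q : ℝ)
    (hq : q = 1 - p) (hp : 0 < p) (hp1 : p < 1) (z : ℝ) (hz : 0 < z) (hzα : z ≤ (α : ℝ)) :
    binomCallExp α p z ≤ (α : ℝ) * ((α : ℝ) - z) * p / z := by
  unfold binomCallExp
  have hαR : (0:ℝ) < α := by exact_mod_cast hα
  have hq0 : (0:ℝ) < 1 - p := by linarith
  have hαz : (0:ℝ) ≤ (α : ℝ) - z := by linarith
  have step1 : (∑ j ∈ Finset.range (α + 1),
      (α.choose j : ℝ) * p ^ j * (1 - p) ^ (α - j) * max ((j : ℝ) - z) 0)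
      ≤ ∑ j ∈ Finset.range (α + 1),
      (α.choose j : ℝ) * p ^ j * (1 - p) ^ (α - j) * ((j : ℝ) * ((α : ℝ) - z) / α) := by
    apply Finset.sum_le_sum
    intro j hj
    have hjα : (j : ℝ) ≤ α := by
      have : j ≤ α := Nat.lt_succ_iff.mp (Finset.mem_range.mp hj)
      exact_mod_cast this
    have hcoef : (0:ℝ) ≤ (α.choose j : ℝ) * p ^ j * (1 - p) ^ (α - j) := by positivity
    apply mul_le_mul_of_nonneg_left _ hcoef
    apply max_le
    · rw [le_div_iff₀ hαR]
      nlinarith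
    · positivity
  have mean : ∑ j ∈ Finset.range (α + 1),
      (j : ℝ) * (α.choose j : ℝ) * p ^ j * (1 - p) ^ (α - j) = (α : ℝ) * p := by
    obtain ⟨n, rfl⟩ := Nat.exists_eq_succ_of_ne_zero hα.ne'
    rw [show n.succ = n + 1 from rfl, binom_mean_aux n p (1 - p)]
    push_cast
    rw [show p + (1 - p) = 1 by ring, one_pow]
    ring
  have step2 : ∑ j ∈ Finset.range (α + 1),
      (α.choose j : ℝ) * p ^ j * (1 - p) ^ (α - j) * ((j : ℝ) * ((α : ℝ) - z) / α)
      = ((α : ℝ) - z) * p := by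
    have : ∀ j ∈ Finset.range (α + 1),
        (α.choose j : ℝ) * p ^ j * (1 - p) ^ (α - j) * ((j : ℝ) * ((α : ℝ) - z) / α)
        = (((α : ℝ) - z) / α) * ((j : ℝ) * (α.choose j : ℝ) * p ^ j * (1 - p) ^ (α - j)) := by
      intro j _; ring
    rw [Finset.sum_congr rfl this, ← Finset.mul_sum, mean]
    field_simp
  have step3 : ((α : ℝ) - z) * p ≤ (α : ℝ) * ((α : ℝ) - z) * p / z := by
    rw [le_div_iff₀ hz]
    nlinarith [mul_nonneg (mul_nonneg hαz hp.le) hαz]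
  linarith
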